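/- arXiv:1412.7265 — 2 statements merged into one kernel-verified Lean document; each statement's English description precedes it below -/
import Mathlib

section
/- Let G be a profinite group satisfying exactness of the sequence H¹(ker χ) → H¹(G) → H²(G) → H²(ker χ) at H²(G) for every χ ∈ H¹(G, ℤ/p). Then the following are equivalent: (1) for all χ₁, χ₂, χ₃ ∈ H¹(G) the triple Massey product ⟨χ₁,χ₂,χ₃⟩ is not essential; (2) for all χ₁, χ₂, χ₃ ∈ H¹(G) such that the pairs (χ₁,χ₃) and (χ₂,χ₃) are each ℤ/p-linearly independent, ⟨χ₁,χ₂,χ₃⟩ is not essential. -/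
/-!  Framework: mod-p group cohomology in low degrees via explicit
inhomogeneous cochains, cup products, restriction, corestriction
(transfer), and triple Massey products. -/

namespace MasseyGalois

variable {p : ℕ}

/-- A (degree-one) character: an additive character `G → ℤ/p`,
i.e. a 1-cocycle; these are exactly the elements of `H¹(G, ℤ/p)`. -/
def IsChar (p : ℕ) {G : Type} [Group G] (χ : G → ZMod p) : Prop :=
  ∀ σ τ : G, χ (σ * τ) = χ σ + χ τ

theorem IsChar.one {G : Type} [Group G] {χ : G → ZMod p} (h : IsChar p χ) :
    χ 1 = 0 := by
  have h1 := h 1 1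
  rw [mul_one] at h1
  exact (left_eq_add.mp h1)

theorem IsChar.inv {G : Type} [Group G] {χ : G → ZMod p} (h : IsChar p χ)
    (σ : G) : χ σ⁻¹ = -χ σ := by
  have h1 := h σ σ⁻¹
  rw [mul_inv_cancel, h.one] at h1
  linear_combination -h1

/-- The kernel of a character, as a subgroup. -/
def charKer {G : Type} [Group G] (χ : G → ZMod p) (h : IsChar p χ) :
    Subgroup G where
  carrier := {σ | χ σ = 0}
  one_mem' := h.one
  mul_mem' := by
    intro a b ha hb
    simp only [Set.mem_setOf_eq] at *
    rw [h a b, ha, hb, add_zero]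
  inv_mem' := by
    intro a ha
    simp only [Set.mem_setOf_eq] at *
    rw [h.inv, ha, neg_zero]

theorem mem_charKer_iff {G : Type} [Group G] {χ : G → ZMod p}
    (h : IsChar p χ) {σ : G} : σ ∈ charKer χ h ↔ χ σ = 0 := Iff.rfl

theorem charKer_normal {G : Type} [Group G] (χ : G → ZMod p)
    (h : IsChar p χ) : (charKer χ h).Normal := by
  constructor
  intro n hn g
  show χ (g * n * g⁻¹) = 0
  rw [h, h, h.inv]
  have hn' : χ n = 0 := hn
  rw [hn']
  ring

theorem charKer_comm_mem {G : Type} [Group G] {χ : G → ZMod p}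
    (h : IsChar p χ) (σ τ : G) : σ * τ * σ⁻¹ * τ⁻¹ ∈ charKer χ h := by
  show χ (σ * τ * σ⁻¹ * τ⁻¹) = 0
  rw [h, h, h, h.inv, h.inv]
  ring

/-- Coboundary of a 1-cochain (inhomogeneous cochains, trivial action). -/
def d1 {G : Type} [Group G] (φ : G → ZMod p) : G → G → ZMod p :=
  fun σ τ => φ σ + φ τ - φ (σ * τ)

/-- Coboundary of a 2-cochain. -/
def d2 {G : Type} [Group G] (f : G → G → ZMod p) : G → G → G → ZMod p :=
  fun σ τ ρ => f τ ρ - f (σ * τ) ρ + f σ (τ * ρ) - f σ τ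

/-- Cup product of two 1-cochains. -/
def cup {G : Type} (χ χ' : G → ZMod p) : G → G → ZMod p :=
  fun σ τ => χ σ * χ' τ

def IsCocycle2 {G : Type} [Group G] (f : G → G → ZMod p) : Prop :=
  ∀ σ τ ρ, d2 f σ τ ρ = 0

def IsCoboundary2 {G : Type} [Group G] (f : G → G → ZMod p) : Prop :=
  ∃ φ : G → ZMod p, f = d1 φ

/-- Two 2-cochains represent the same class in `H²`. -/
def Cohomologous {G : Type} [Group G] (f g : G → G → ZMod p) : Prop :=
  IsCoboundary2 (f - g)

/-- `z` is the value `χ₁ ∪ φ₂₃ + φ₁₂ ∪ χ₃` of a defining system for the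
triple Massey product `⟨χ₁, χ₂, χ₃⟩`. -/
def MasseyRep {G : Type} [Group G] (χ₁ χ₂ χ₃ : G → ZMod p)
    (z : G → G → ZMod p) : Prop :=
  ∃ φ₁₂ φ₂₃ : G → ZMod p,
    d1 φ₁₂ = cup χ₁ χ₂ ∧ d1 φ₂₃ = cup χ₂ χ₃ ∧
    z = cup χ₁ φ₂₃ + cup φ₁₂ χ₃

/-- The set of all 2-cocycles whose class lies in the triple Massey
product `⟨χ₁, χ₂, χ₃⟩ ⊆ H²`; as this set is closed under coboundaries,
equalities/membership statements about it faithfully encode the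
corresponding statements about the subset of `H²`. -/
def MasseySet {G : Type} [Group G] (χ₁ χ₂ χ₃ : G → ZMod p) :
    Set (G → G → ZMod p) :=
  {z | ∃ z', MasseyRep χ₁ χ₂ χ₃ z' ∧ Cohomologous z z'}

/-- The Massey product is essential: non-empty but not containing `0`. -/
def MasseyEssential {G : Type} [Group G] (χ₁ χ₂ χ₃ : G → ZMod p) : Prop :=
  (MasseySet χ₁ χ₂ χ₃).Nonempty ∧
    (0 : G → G → ZMod p) ∉ MasseySet χ₁ χ₂ χ₃

/-- `ℤ/p`-linear independence of a pair of characters. -/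
def LinIndepPair {G : Type} (χ χ' : G → ZMod p) : Prop :=
  ∀ a b : ZMod p, (∀ g : G, a * χ g + b * χ' g = 0) → a = 0 ∧ b = 0

/-- Restriction of a 1-cochain to a subgroup. -/
def res1 {G : Type} [Group G] (U : Subgroup G) (χ : G → ZMod p) :
    ↥U → ZMod p := fun u => χ ↑u

/-- Restriction of a 2-cochain to a subgroup. -/
def res2 {G : Type} [Group G] (U : Subgroup G) (f : G → G → ZMod p) :
    ↥U → ↥U → ZMod p := fun u v => f ↑u ↑v

/-- Corestriction (transfer) on `H¹` from a finite-index subgroup. -/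
noncomputable def cor1 {G : Type} [Group G] (K : Subgroup G)
    (φ : ↥K → ZMod p) : G → ZMod p := by
  classical
  exact if h : K.FiniteIndex ∧ IsChar p φ then
    haveI := h.1
    let φ' : ↥K →* Multiplicative (ZMod p) :=
      { toFun := fun k => Multiplicative.ofAdd (φ k)
        map_one' := by
          show Multiplicative.ofAdd (φ 1) = 1
          rw [h.2.one]; rfl
        map_mul' := fun a b => by
          show Multiplicative.ofAdd (φ (a * b)) = _
          rw [h.2 a b]; rfl }
    fun g => Multiplicative.toAdd (MonoidHom.transfer φ' g)
  else 0

/-- Exactness of `H¹(ker χ) →(Cor) H¹(H) →(χ ∪ ·) H²(H)` at `H¹(H)`. -/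
def ExactAtH1 {H : Type} [Group H] (p : ℕ) (χ : H → ZMod p)
    (hχ : IsChar p χ) : Prop :=
  ∀ lam : H → ZMod p, IsChar p lam →
    (IsCoboundary2 (cup χ lam) ↔
      ∃ μ : ↥(charKer χ hχ) → ZMod p, IsChar p μ ∧
        lam = cor1 (charKer χ hχ) μ)

/-- Exactness of `H¹(H) →(χ ∪ ·) H²(H) →(Res) H²(ker χ)` at `H²(H)`. -/
def ExactAtH2 {H : Type} [Group H] (p : ℕ) (χ : H → ZMod p)
    (hχ : IsChar p χ) : Prop :=
  ∀ f : H → H → ZMod p, IsCocycle2 f →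
    (IsCoboundary2 (res2 (charKer χ hχ) f) ↔
      ∃ lam : H → ZMod p, IsChar p lam ∧ Cohomologous f (cup χ lam))

end MasseyGalois

namespace MasseyHelper

open MasseyGalois

variable {p : ℕ} {G : Type} [Group G]

lemma d1_zero : d1 (0 : G → ZMod p) = 0 := by
  funext σ τ
  simp [d1]

lemma cup_zero_right (χ : G → ZMod p) : cup χ (0 : G → ZMod p) = 0 := by
  funext σ τ
  simp [cup]

lemma cup_zero_left (χ : G → ZMod p) : cup (0 : G → ZMod p) χ = 0 := by
  funext σ τ
  simp [cup]

lemma mem_masseySet_of_rep {χ₁ χ₂ χ₃ : G → ZMod p} {w : G → G → ZMod p}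
    (h : MasseyRep χ₁ χ₂ χ₃ w) : w ∈ MasseySet χ₁ χ₂ χ₃ :=
  ⟨w, h, ⟨0, by rw [sub_self, d1_zero]⟩⟩

lemma notEss_of_char1_zero (χ₂ χ₃ : G → ZMod p) :
    ¬ MasseyEssential (0 : G → ZMod p) χ₂ χ₃ := by
  rintro ⟨⟨z, z', ⟨φ₁₂, φ₂₃, h12, h23, hz'⟩, hc⟩, h0⟩
  apply h0
  refine mem_masseySet_of_rep ⟨0, φ₂₃, ?_, h23, ?_⟩
  · rw [d1_zero, cup_zero_left]
  · rw [cup_zero_left, cup_zero_left, add_zero]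

lemma notEss_of_char2_zero (χ₁ χ₃ : G → ZMod p) :
    ¬ MasseyEssential χ₁ (0 : G → ZMod p) χ₃ := by
  rintro ⟨_, h0⟩
  apply h0
  refine mem_masseySet_of_rep ⟨0, 0, ?_, ?_, ?_⟩
  · rw [d1_zero, cup_zero_right]
  · rw [d1_zero, cup_zero_left]
  · rw [cup_zero_right, cup_zero_left, add_zero]

lemma notEss_of_char3_zero (χ₁ χ₂ : G → ZMod p) :
    ¬ MasseyEssential χ₁ χ₂ (0 : G → ZMod p) := by
  rintro ⟨⟨z, z', ⟨φ₁₂, φ₂₃, h12, h23, hz'⟩, hc⟩, h0⟩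
  apply h0
  refine mem_masseySet_of_rep ⟨φ₁₂, 0, ?_, ?_, ?_⟩
  · exact h12
  · rw [d1_zero, cup_zero_right]
  · rw [cup_zero_right, cup_zero_right, add_zero]

lemma rep_isCocycle {χ₁ χ₂ χ₃ φ₁₂ φ₂₃ : G → ZMod p}
    (h1 : IsChar p χ₁) (h3 : IsChar p χ₃)
    (h12 : d1 φ₁₂ = cup χ₁ χ₂) (h23 : d1 φ₂₃ = cup χ₂ χ₃) :
    IsCocycle2 (cup χ₁ φ₂₃ + cup φ₁₂ χ₃) := by
  intro σ τ ρ
  have e12 : φ₁₂ (σ * τ) = φ₁₂ σ + φ₁₂ τ - χ₁ σ * χ₂ τ := by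
    have h := congrFun (congrFun h12 σ) τ
    simp only [d1, cup] at h
    linear_combination -h
  have e23 : φ₂₃ (τ * ρ) = φ₂₃ τ + φ₂₃ ρ - χ₂ τ * χ₃ ρ := by
    have h := congrFun (congrFun h23 τ) ρ
    simp only [d1, cup] at h
    linear_combination -h
  simp only [d2, Pi.add_apply, cup]
  rw [e12, e23, h1 σ τ, h3 τ ρ]
  ring

/-- The key case: `χ₃` proportional to `χ₁`, using exactness at `H²`. -/
lemma notEss_of_dep13 {χ₁ χ₂ χ₃ : G → ZMod p}
    (h1 : IsChar p χ₁) (h2 : IsChar p χ₂) (h3 : IsChar p χ₃)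
    (hex : ExactAtH2 p χ₁ h1) (e : ZMod p) (he : ∀ g, χ₃ g = e * χ₁ g) :
    ¬ MasseyEssential χ₁ χ₂ χ₃ := by
  rintro ⟨⟨z0, z0', ⟨φ₁₂, φ₂₃, h12, h23, hz'⟩, hc⟩, h0⟩
  have hzc : IsCocycle2 (cup χ₁ φ₂₃ + cup φ₁₂ χ₃) := rep_isCocycle h1 h3 h12 h23
  have hres : IsCoboundary2 (res2 (charKer χ₁ h1) (cup χ₁ φ₂₃ + cup φ₁₂ χ₃)) := by
    refine ⟨0, ?_⟩
    funext u v
    have hu : χ₁ (u : G) = 0 := u.2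
    have hv : χ₁ (v : G) = 0 := v.2
    simp [res2, d1, Pi.add_apply, cup, hu, hv, he]
  obtain ⟨lam, hlam, ψ, hψ⟩ := (hex (cup χ₁ φ₂₃ + cup φ₁₂ χ₃) hzc).mp hres
  apply h0
  refine ⟨cup χ₁ (φ₂₃ - lam) + cup φ₁₂ χ₃, ⟨φ₁₂, φ₂₃ - lam, h12, ?_, rfl⟩, ⟨-ψ, ?_⟩⟩
  · funext σ τ
    have h := congrFun (congrFun h23 σ) τ
    have hl := hlam σ τ
    simp only [d1, cup, Pi.sub_apply] at h ⊢
    linear_combination h + hl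
  · funext σ τ
    have hψ' := congrFun (congrFun hψ σ) τ
    simp only [Pi.sub_apply, Pi.add_apply, Pi.neg_apply, Pi.zero_apply, cup, d1] at hψ' ⊢
    linear_combination -hψ'

/-- The reversal operator implementing `⟨χ₃,χ₂,χ₁⟩ = -⟨χ₁,χ₂,χ₃⟩ᵀ`. -/
def Nmap (f : G → G → ZMod p) : G → G → ZMod p := fun σ τ => - f τ⁻¹ σ⁻¹

lemma Nmap_zero : Nmap (0 : G → G → ZMod p) = 0 := by
  funext σ τ
  simp [Nmap]

lemma Nmap_rep {χ₁ χ₂ χ₃ : G → ZMod p}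
    (h1 : IsChar p χ₁) (h2 : IsChar p χ₂) (h3 : IsChar p χ₃)
    {z : G → G → ZMod p} (hz : MasseyRep χ₁ χ₂ χ₃ z) :
    MasseyRep χ₃ χ₂ χ₁ (Nmap z) := by
  obtain ⟨φ₁₂, φ₂₃, h12, h23, rfl⟩ := hz
  refine ⟨fun g => φ₂₃ g⁻¹, fun g => φ₁₂ g⁻¹, ?_, ?_, ?_⟩
  · funext σ τ
    have h := congrFun (congrFun h23 τ⁻¹) σ⁻¹
    simp only [d1, cup] at h ⊢
    rw [h2.inv, h3.inv] at h
    rw [mul_inv_rev]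
    linear_combination h
  · funext σ τ
    have h := congrFun (congrFun h12 τ⁻¹) σ⁻¹
    simp only [d1, cup] at h ⊢
    rw [h1.inv, h2.inv] at h
    rw [mul_inv_rev]
    linear_combination h
  · funext σ τ
    simp only [Nmap, Pi.add_apply, cup]
    rw [h1.inv, h3.inv]
    ring

lemma Nmap_coh {f g : G → G → ZMod p} (h : Cohomologous f g) :
    Cohomologous (Nmap f) (Nmap g) := by
  obtain ⟨ψ, hψ⟩ := h
  refine ⟨fun g => -ψ g⁻¹, ?_⟩
  funext σ τ
  have h' := congrFun (congrFun hψ τ⁻¹) σ⁻¹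
  simp only [Nmap, Pi.sub_apply, d1] at h' ⊢
  rw [mul_inv_rev]
  linear_combination -h'

lemma Nmap_mem {χ₁ χ₂ χ₃ : G → ZMod p}
    (h1 : IsChar p χ₁) (h2 : IsChar p χ₂) (h3 : IsChar p χ₃)
    {z : G → G → ZMod p} (hz : z ∈ MasseySet χ₁ χ₂ χ₃) :
    Nmap z ∈ MasseySet χ₃ χ₂ χ₁ := by
  obtain ⟨z', hrep, hcoh⟩ := hz
  exact ⟨Nmap z', Nmap_rep h1 h2 h3 hrep, Nmap_coh hcoh⟩

lemma ess_symm {χ₁ χ₂ χ₃ : G → ZMod p}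
    (h1 : IsChar p χ₁) (h2 : IsChar p χ₂) (h3 : IsChar p χ₃)
    (h : MasseyEssential χ₁ χ₂ χ₃) : MasseyEssential χ₃ χ₂ χ₁ := by
  obtain ⟨⟨z, hz⟩, h0⟩ := h
  refine ⟨⟨Nmap z, Nmap_mem h1 h2 h3 hz⟩, fun hz0 => h0 ?_⟩
  have := Nmap_mem h3 h2 h1 hz0
  rwa [Nmap_zero] at this

end MasseyHelper

open MasseyGalois in
/-- Proposition: under exactness at `H²(G)` of
`H¹(G) →(χ∪) H²(G) →(Res) H²(ker χ)` for every `χ ∈ H¹(G)`, all triple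
Massey products are non-essential iff those with `(χ₁,χ₃)` and `(χ₂,χ₃)`
linearly independent are non-essential. -/
theorem massey_not_essential_reduction {p : ℕ} (hp : p.Prime) {G : Type}
    [Group G]
    (hex : ∀ (χ : G → ZMod p) (hχ : IsChar p χ), ExactAtH2 p χ hχ) :
    ((∀ χ₁ χ₂ χ₃ : G → ZMod p, IsChar p χ₁ → IsChar p χ₂ → IsChar p χ₃ →
        ¬ MasseyEssential χ₁ χ₂ χ₃) ↔
      (∀ χ₁ χ₂ χ₃ : G → ZMod p, IsChar p χ₁ → IsChar p χ₂ → IsChar p χ₃ →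
        LinIndepPair χ₁ χ₃ → LinIndepPair χ₂ χ₃ →
        ¬ MasseyEssential χ₁ χ₂ χ₃)) := by
  haveI : Fact p.Prime := ⟨hp⟩
  constructor
  · intro H χ₁ χ₂ χ₃ h1 h2 h3 _ _
    exact H χ₁ χ₂ χ₃ h1 h2 h3
  · intro H χ₁ χ₂ χ₃ h1 h2 h3
    by_cases hA : LinIndepPair χ₁ χ₃
    · by_cases hB : LinIndepPair χ₂ χ₃
      · exact H χ₁ χ₂ χ₃ h1 h2 h3 hA hB
      · -- (χ₂, χ₃) linearly dependent
        rw [LinIndepPair] at hB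
        push_neg at hB
        obtain ⟨a, b, hab, hne⟩ := hB
        by_cases hb : b = 0
        · -- then a ≠ 0 and χ₂ = 0
          have ha : a ≠ 0 := by
            intro ha0
            exact hne ha0 hb
          have hχ₂ : χ₂ = 0 := by
            funext g
            have := hab g
            rw [hb, zero_mul, add_zero] at this
            exact (mul_eq_zero.mp this).resolve_left ha
          rw [hχ₂]
          exact MasseyHelper.notEss_of_char2_zero χ₁ χ₃
        · -- χ₃ = e • χ₂ with e = -a * b⁻¹
          have he : ∀ g, χ₃ g = (-a * b⁻¹) * χ₂ g := by
            intro g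
            field_simp
            linear_combination hab g
          by_cases ha : a = 0
          · have hχ₃ : χ₃ = 0 := by
              funext g
              rw [he g, ha, neg_zero, zero_mul, zero_mul]
              rfl
            rw [hχ₃]
            exact MasseyHelper.notEss_of_char3_zero χ₁ χ₂
          · have hez : (-a * b⁻¹ : ZMod p) ≠ 0 :=
              mul_ne_zero (neg_ne_zero.mpr ha) (inv_ne_zero hb)
            have hind31 : LinIndepPair χ₃ χ₁ := by
              intro u v huv
              have := hA v u (fun g => by linear_combination huv g)
              exact ⟨this.2, this.1⟩
            have hind21 : LinIndepPair χ₂ χ₁ := by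
              intro u v huv
              have key : ∀ g : G, v * χ₁ g + (u * (-a * b⁻¹)⁻¹) * χ₃ g = 0 := by
                intro g
                rw [he g]
                have hinv : (-a * b⁻¹)⁻¹ * (-a * b⁻¹) = 1 := inv_mul_cancel₀ hez
                linear_combination huv g + u * χ₂ g * hinv
              have := hA v (u * (-a * b⁻¹)⁻¹) key
              refine ⟨?_, this.1⟩
              have h2' := this.2
              rcases mul_eq_zero.mp h2' with h | h
              · exact h
              · exact absurd h (inv_ne_zero hez)
            intro hess
            exact H χ₃ χ₂ χ₁ h3 h2 h1 hind31 hind21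
              (MasseyHelper.ess_symm h1 h2 h3 hess)
    · -- (χ₁, χ₃) linearly dependent
      rw [LinIndepPair] at hA
      push_neg at hA
      obtain ⟨a, b, hab, hne⟩ := hA
      by_cases hb : b = 0
      · have ha : a ≠ 0 := by
          intro ha0
          exact hne ha0 hb
        have hχ₁ : χ₁ = 0 := by
          funext g
          have := hab g
          rw [hb, zero_mul, add_zero] at this
          exact (mul_eq_zero.mp this).resolve_left ha
        rw [hχ₁]
        exact MasseyHelper.notEss_of_char1_zero χ₂ χ₃
      · have he : ∀ g, χ₃ g = (-a * b⁻¹) * χ₁ g := by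
          intro g
          field_simp
          linear_combination hab g
        exact MasseyHelper.notEss_of_dep13 h1 h2 h3 (hex χ₁ h1) (-a * b⁻¹) he
end

section
/- Let G be a profinite group, U an open subgroup of index prime to p, and χ₁, χ₂, χ₃ ∈ H¹(G, ℤ/p). Suppose α ∈ ⟨χ₁,χ₂,χ₃⟩ and that Res_U α = Res_U(χ₁) ∪ ψ₁ + Res_U(χ₃) ∪ ψ₃ for some ψ₁, ψ₃ ∈ H¹(U). Then (G:U)·α = χ₁ ∪ Cor_G(ψ₁) + χ₃ ∪ Cor_G(ψ₃), and consequently 0 ∈ ⟨χ₁,χ₂,χ₃⟩. -/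
namespace MasseyAux
open MasseyGalois Subgroup

variable {p : ℕ} {G : Type} [Group G] (U : Subgroup G)

noncomputable def uElt (r : G ⧸ U) (σ : G) : ↥U :=
  ⟨r.out⁻¹ * σ * (σ⁻¹ • r).out, by
    have h1 : ((σ * (σ⁻¹ • r).out : G) : G ⧸ U) = ((r.out : G) : G ⧸ U) := by
      calc ((σ * (σ⁻¹ • r).out : G) : G ⧸ U) = σ • (((σ⁻¹ • r).out : G) : G ⧸ U) := rfl
        _ = σ • (σ⁻¹ • r) := by rw [QuotientGroup.out_eq']
        _ = r := smul_inv_smul σ r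
        _ = ((r.out : G) : G ⧸ U) := (QuotientGroup.out_eq' r).symm
    have h2 := QuotientGroup.eq.mp h1.symm
    rwa [← mul_assoc] at h2⟩

lemma uElt_coe (r : G ⧸ U) (σ : G) :
    ((uElt U r σ : ↥U) : G) = r.out⁻¹ * σ * (σ⁻¹ • r).out := rfl

lemma uElt_mul (r : G ⧸ U) (σ τ : G) :
    uElt U r σ * uElt U (σ⁻¹ • r) τ = uElt U r (σ * τ) := by
  ext
  simp only [Subgroup.coe_mul, uElt_coe]
  rw [show ((σ * τ)⁻¹ • r) = τ⁻¹ • (σ⁻¹ • r) by rw [mul_inv_rev, mul_smul]]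
  group

lemma sum_reindex [Fintype (G ⧸ U)] (σ : G) (F : G ⧸ U → ZMod p) :
    ∑ r : G ⧸ U, F (σ⁻¹ • r) = ∑ r : G ⧸ U, F r :=
  Equiv.sum_comp (MulAction.toPerm σ⁻¹ : Equiv.Perm (G ⧸ U)) F

variable [U.FiniteIndex]

noncomputable def Cor1 (φ : ↥U → ZMod p) : G → ZMod p := fun σ =>
  letI := U.fintypeQuotientOfFiniteIndex
  ∑ r : G ⧸ U, φ (uElt U r σ)

noncomputable def Cor2 (f : ↥U → ↥U → ZMod p) : G → G → ZMod p := fun σ τ =>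
  letI := U.fintypeQuotientOfFiniteIndex
  ∑ r : G ⧸ U, f (uElt U r σ) (uElt U (σ⁻¹ • r) τ)

lemma Cor2_d1 (φ : ↥U → ZMod p) : Cor2 U (d1 φ) = d1 (Cor1 U φ) := by
  letI := U.fintypeQuotientOfFiniteIndex
  funext σ τ
  have e1 : ∑ r : G ⧸ U, φ (uElt U (σ⁻¹ • r) τ) = ∑ r : G ⧸ U, φ (uElt U r τ) :=
    sum_reindex U σ (fun r => φ (uElt U r τ))
  simp only [Cor2, Cor1, d1]
  calc ∑ r : G ⧸ U, (φ (uElt U r σ) + φ (uElt U (σ⁻¹ • r) τ)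
        - φ (uElt U r σ * uElt U (σ⁻¹ • r) τ))
      = ∑ r : G ⧸ U, (φ (uElt U r σ) + φ (uElt U (σ⁻¹ • r) τ)
        - φ (uElt U r (σ * τ))) :=
        Finset.sum_congr rfl fun r _ => by rw [uElt_mul]
    _ = ∑ r : G ⧸ U, φ (uElt U r σ) + ∑ r : G ⧸ U, φ (uElt U r τ)
        - ∑ r : G ⧸ U, φ (uElt U r (σ * τ)) := by
        rw [Finset.sum_sub_distrib, Finset.sum_add_distrib, e1]

lemma Cor2_add (f g : ↥U → ↥U → ZMod p) :
    Cor2 U (f + g) = Cor2 U f + Cor2 U g := by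
  letI := U.fintypeQuotientOfFiniteIndex
  funext σ τ
  simp only [Cor2, Pi.add_apply, Finset.sum_add_distrib]

lemma Cor1_isChar {φ : ↥U → ZMod p} (hφ : IsChar p φ) : IsChar p (Cor1 U φ) := by
  intro σ τ
  letI := U.fintypeQuotientOfFiniteIndex
  have e1 : ∑ r : G ⧸ U, φ (uElt U (σ⁻¹ • r) τ) = ∑ r : G ⧸ U, φ (uElt U r τ) :=
    sum_reindex U σ (fun r => φ (uElt U r τ))
  simp only [Cor1]
  calc ∑ r : G ⧸ U, φ (uElt U r (σ * τ))
      = ∑ r : G ⧸ U, (φ (uElt U r σ) + φ (uElt U (σ⁻¹ • r) τ)) :=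
        Finset.sum_congr rfl fun r _ => by rw [← uElt_mul, hφ]
    _ = ∑ r : G ⧸ U, φ (uElt U r σ) + ∑ r : G ⧸ U, φ (uElt U r τ) := by
        rw [Finset.sum_add_distrib, e1]

lemma cocycle_translate (f : G → G → ZMod p) (hf : IsCocycle2 f) (a b c σ τ : G) :
    f (a⁻¹ * σ * b) (b⁻¹ * τ * c) =
      f σ τ + (-(f a⁻¹ σ - f (a⁻¹ * σ * b) b⁻¹)
        + (f a⁻¹ (σ * τ) - f (a⁻¹ * (σ * τ) * c) c⁻¹)
        - (f b⁻¹ τ - f (b⁻¹ * τ * c) c⁻¹)) := by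
  have h1 := hf (a⁻¹ * σ * b) b⁻¹ τ
  have h2 := hf a⁻¹ σ τ
  have h3 := hf (a⁻¹ * σ * b) (b⁻¹ * τ * c) c⁻¹
  simp only [d2] at h1 h2 h3
  rw [show a⁻¹ * σ * b * b⁻¹ = a⁻¹ * σ by group] at h1
  rw [show a⁻¹ * σ * b * (b⁻¹ * τ * c) = a⁻¹ * (σ * τ) * c by group,
      show b⁻¹ * τ * c * c⁻¹ = b⁻¹ * τ by group] at h3
  linear_combination h1 - h2 - h3

lemma Cor2_res2 (f : G → G → ZMod p) (hf : IsCocycle2 f) :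
    ∃ h : G → ZMod p, Cor2 U (res2 U f) = (U.index : ZMod p) • f + d1 h := by
  letI := U.fintypeQuotientOfFiniteIndex
  set Ht : (G ⧸ U) → G → ZMod p := fun r σ =>
    f r.out⁻¹ σ - f ((uElt U r σ : ↥U) : G) (σ⁻¹ • r).out⁻¹ with hHt
  refine ⟨fun σ => -∑ r : G ⧸ U, Ht r σ, ?_⟩
  funext σ τ
  have key : ∀ r : G ⧸ U,
      res2 U f (uElt U r σ) (uElt U (σ⁻¹ • r) τ)
        = f σ τ + (-(Ht r σ) + Ht r (σ * τ) - Ht (σ⁻¹ • r) τ) := by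
    intro r
    have hsm : τ⁻¹ • (σ⁻¹ • r) = (σ * τ)⁻¹ • r := by rw [mul_inv_rev, mul_smul]
    have h := cocycle_translate f hf r.out (σ⁻¹ • r).out ((σ * τ)⁻¹ • r).out σ τ
    simp only [res2, hHt, uElt_coe, hsm]
    exact h
  have reidx : ∑ r : G ⧸ U, Ht (σ⁻¹ • r) τ = ∑ r : G ⧸ U, Ht r τ :=
    sum_reindex U σ (fun r => Ht r τ)
  have hcard : (U.index : ZMod p) = (Fintype.card (G ⧸ U) : ZMod p) := by
    rw [Subgroup.index_eq_card, Nat.card_eq_fintype_card]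
  calc Cor2 U (res2 U f) σ τ
      = ∑ r : G ⧸ U, (f σ τ + (-(Ht r σ) + Ht r (σ * τ) - Ht (σ⁻¹ • r) τ)) :=
        Finset.sum_congr rfl fun r _ => key r
    _ = (Fintype.card (G ⧸ U) : ZMod p) * f σ τ
        + ((-∑ r : G ⧸ U, Ht r σ) + ∑ r : G ⧸ U, Ht r (σ * τ)
          - ∑ r : G ⧸ U, Ht r τ) := by
        rw [Finset.sum_add_distrib, Finset.sum_sub_distrib, Finset.sum_add_distrib,
          Finset.sum_neg_distrib, reidx, Finset.sum_const, Finset.card_univ,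
          nsmul_eq_mul]
    _ = ((U.index : ZMod p) • f + d1 (fun σ => -∑ r : G ⧸ U, Ht r σ)) σ τ := by
        simp only [Pi.add_apply, Pi.smul_apply, smul_eq_mul, d1, hcard]
        ring

lemma Cor2_cup (χ : G → ZMod p) (ψ : ↥U → ZMod p)
    (hχ : IsChar p χ) (hψ : IsChar p ψ) :
    ∃ m : G → ZMod p, Cor2 U (cup (res1 U χ) ψ) = cup χ (Cor1 U ψ) + d1 m := by
  letI := U.fintypeQuotientOfFiniteIndex
  refine ⟨fun σ => -∑ r : G ⧸ U, χ r.out⁻¹ * ψ (uElt U r σ), ?_⟩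
  funext σ τ
  have e1 : ∑ r : G ⧸ U, χ ((uElt U r σ : ↥U) : G) * ψ (uElt U (σ⁻¹ • r) τ)
      = χ σ * (∑ r : G ⧸ U, ψ (uElt U (σ⁻¹ • r) τ))
        + ((∑ r : G ⧸ U, χ r.out⁻¹ * ψ (uElt U (σ⁻¹ • r) τ))
          - ∑ r : G ⧸ U, χ (σ⁻¹ • r).out⁻¹ * ψ (uElt U (σ⁻¹ • r) τ)) := by
    rw [Finset.mul_sum, ← Finset.sum_sub_distrib, ← Finset.sum_add_distrib]
    refine Finset.sum_congr rfl fun r _ => ?_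
    have hb := hχ.inv ((σ⁻¹ • r).out⁻¹)
    rw [inv_inv] at hb
    have hcoe : χ ((uElt U r σ : ↥U) : G)
        = χ r.out⁻¹ + χ σ - χ (σ⁻¹ • r).out⁻¹ := by
      rw [uElt_coe]
      linear_combination hχ (r.out⁻¹ * σ) ((σ⁻¹ • r).out) + hχ r.out⁻¹ σ + hb
    linear_combination ψ (uElt U (σ⁻¹ • r) τ) * hcoe
  have e2 : ∑ r : G ⧸ U, ψ (uElt U (σ⁻¹ • r) τ) = ∑ r : G ⧸ U, ψ (uElt U r τ) :=
    sum_reindex U σ (fun r => ψ (uElt U r τ))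
  have e3 : ∑ r : G ⧸ U, χ (σ⁻¹ • r).out⁻¹ * ψ (uElt U (σ⁻¹ • r) τ)
      = ∑ r : G ⧸ U, χ r.out⁻¹ * ψ (uElt U r τ) :=
    sum_reindex U σ (fun r => χ r.out⁻¹ * ψ (uElt U r τ))
  have e4 : ∑ r : G ⧸ U, χ r.out⁻¹ * ψ (uElt U (σ⁻¹ • r) τ)
      = (∑ r : G ⧸ U, χ r.out⁻¹ * ψ (uElt U r (σ * τ)))
        - ∑ r : G ⧸ U, χ r.out⁻¹ * ψ (uElt U r σ) := by
    rw [← Finset.sum_sub_distrib]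
    refine Finset.sum_congr rfl fun r _ => ?_
    have h := hψ (uElt U r σ) (uElt U (σ⁻¹ • r) τ)
    rw [uElt_mul] at h
    linear_combination (-(χ r.out⁻¹)) * h
  show (∑ r : G ⧸ U, cup (res1 U χ) ψ (uElt U r σ) (uElt U (σ⁻¹ • r) τ)) = _
  simp only [cup, res1, Pi.add_apply, d1, Cor1]
  linear_combination e1 + χ σ * e2 + e4 - e3


lemma transfer_toAdd (φ : ↥U →* Multiplicative (ZMod p)) (g : G) :
    Multiplicative.toAdd (MonoidHom.transfer φ g)
      = (letI := U.fintypeQuotientOfFiniteIndex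
         ∑ r : G ⧸ U, Multiplicative.toAdd (φ (uElt U r g))) := by
  letI := U.fintypeQuotientOfFiniteIndex
  set T₀ : U.LeftTransversal :=
    ⟨Set.range Quotient.out, Subgroup.isComplement_range_left Quotient.out_eq'⟩
    with hT₀
  rw [MonoidHom.transfer_def φ T₀ g]
  unfold Subgroup.leftTransversals.diff
  rw [toAdd_prod]
  refine Finset.sum_congr rfl fun q _ => ?_
  congr 1
  refine congrArg φ (Subtype.ext ?_)
  have h1 : ∀ q : G ⧸ U,
      ((T₀.2.leftQuotientEquiv q : ↥(T₀ : Set G)) : G)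
        = q.out :=
    fun q => Subgroup.IsComplement.leftQuotientEquiv_apply Quotient.out_eq' q
  have h2 : (((g • T₀).2.leftQuotientEquiv q : G)) =
      g * (g⁻¹ • q).out := by
    rw [Subgroup.smul_apply_eq_smul_apply_inv_smul g T₀ q, h1]
    rfl
  show ((T₀.2.leftQuotientEquiv q : G))⁻¹
      * ((g • T₀).2.leftQuotientEquiv q : G)
      = ((uElt U q g : ↥U) : G)
  rw [h1, h2, uElt_coe, mul_assoc]

lemma cor1_eq_Cor1 {ψ : ↥U → ZMod p} (hψ : IsChar p ψ) :
    cor1 U ψ = Cor1 U ψ := by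
  have hcond : U.FiniteIndex ∧ IsChar p ψ := ⟨inferInstance, hψ⟩
  unfold MasseyGalois.cor1
  rw [dif_pos hcond]
  funext g
  rw [transfer_toAdd]
  rfl


lemma masseySet_cocycle {p : ℕ} {G : Type} [Group G] {χ₁ χ₂ χ₃ : G → ZMod p}
    (h₁ : IsChar p χ₁) (h₃ : IsChar p χ₃) {α : G → G → ZMod p}
    (hα : α ∈ MasseySet χ₁ χ₂ χ₃) : IsCocycle2 α := by
  obtain ⟨z', ⟨φ₁₂, φ₂₃, hd12, hd23, hz⟩, φ₀, hφ₀⟩ := hα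
  have A : ∀ x y : G, α x y
      = χ₁ x * φ₂₃ y + φ₁₂ x * χ₃ y + (φ₀ x + φ₀ y - φ₀ (x * y)) := by
    intro x y
    have h := congrFun (congrFun hφ₀ x) y
    have hz' := congrFun (congrFun hz x) y
    simp only [Pi.sub_apply, Pi.add_apply, d1, cup] at h hz'
    linear_combination h + hz'
  intro σ τ ρ
  have c1 := h₁ σ τ
  have c3 := h₃ τ ρ
  have e12 := congrFun (congrFun hd12 σ) τ
  have e23 := congrFun (congrFun hd23 τ) ρ
  simp only [d1, cup] at e12 e23
  have hp0 := congrArg φ₀ (mul_assoc σ τ ρ)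
  simp only [d2]
  linear_combination (A τ ρ) - (A (σ * τ) ρ) + (A σ (τ * ρ)) - (A σ τ) + hp0
    - φ₂₃ ρ * c1 - χ₁ σ * e23 + χ₃ ρ * e12 + φ₁₂ σ * c3

end MasseyAux


open MasseyGalois in
/-- The restriction-corestriction argument: if `U` has index prime to `p`,
`α ∈ ⟨χ₁,χ₂,χ₃⟩`, and `Res_U α = Res_U(χ₁) ∪ ψ₁ + Res_U(χ₃) ∪ ψ₃`, then
`(G:U)·α = χ₁ ∪ Cor_G ψ₁ + χ₃ ∪ Cor_G ψ₃` and `0 ∈ ⟨χ₁,χ₂,χ₃⟩`. -/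
theorem massey_res_cor_argument {p : ℕ} (hp : p.Prime) {G : Type} [Group G]
    (U : Subgroup G) (hUfin : U.FiniteIndex) (hUp : Nat.Coprime U.index p)
    (χ₁ χ₂ χ₃ : G → ZMod p)
    (h₁ : IsChar p χ₁) (h₂ : IsChar p χ₂) (h₃ : IsChar p χ₃)
    (α : G → G → ZMod p) (hα : α ∈ MasseySet χ₁ χ₂ χ₃)
    (ψ₁ ψ₃ : ↥U → ZMod p) (hψ₁ : IsChar p ψ₁) (hψ₃ : IsChar p ψ₃)
    (hres : Cohomologous (res2 U α)
      (cup (res1 U χ₁) ψ₁ + cup (res1 U χ₃) ψ₃)) :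
    Cohomologous ((U.index : ZMod p) • α)
        (cup χ₁ (cor1 U ψ₁) + cup χ₃ (cor1 U ψ₃)) ∧
      (0 : G → G → ZMod p) ∈ MasseySet χ₁ χ₂ χ₃ := by
  haveI := hUfin
  haveI : Fact p.Prime := ⟨hp⟩
  have hαco : IsCocycle2 α := MasseyAux.masseySet_cocycle h₁ h₃ hα
  obtain ⟨w2, hC⟩ := MasseyAux.Cor2_res2 U α hαco
  obtain ⟨m₁, hm₁⟩ := MasseyAux.Cor2_cup U χ₁ ψ₁ h₁ hψ₁
  obtain ⟨m₃, hm₃⟩ := MasseyAux.Cor2_cup U χ₃ ψ₃ h₃ hψ₃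
  obtain ⟨φr, hφr⟩ := hres
  have hL₁ : cor1 U ψ₁ = MasseyAux.Cor1 U ψ₁ := MasseyAux.cor1_eq_Cor1 U hψ₁
  have hL₃ : cor1 U ψ₃ = MasseyAux.Cor1 U ψ₃ := MasseyAux.cor1_eq_Cor1 U hψ₃
  have hres2 : res2 U α = cup (res1 U χ₁) ψ₁ + cup (res1 U χ₃) ψ₃ + d1 φr := by
    funext u v
    have h := congrFun (congrFun hφr u) v
    simp only [Pi.sub_apply, Pi.add_apply] at h ⊢
    linear_combination h
  have hsplit : MasseyAux.Cor2 U (res2 U α)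
      = MasseyAux.Cor2 U (cup (res1 U χ₁) ψ₁) + MasseyAux.Cor2 U (cup (res1 U χ₃) ψ₃)
        + d1 (MasseyAux.Cor1 U φr) := by
    rw [hres2, MasseyAux.Cor2_add, MasseyAux.Cor2_add, MasseyAux.Cor2_d1]
  have E : (U.index : ZMod p) • α
      - (cup χ₁ (cor1 U ψ₁) + cup χ₃ (cor1 U ψ₃))
      = d1 (m₁ + m₃ + MasseyAux.Cor1 U φr - w2) := by
    rw [hL₁, hL₃]
    funext σ τ
    have t1 := congrFun (congrFun hC σ) τ
    have t2 := congrFun (congrFun hsplit σ) τ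
    have t3 := congrFun (congrFun hm₁ σ) τ
    have t4 := congrFun (congrFun hm₃ σ) τ
    simp only [Pi.add_apply, Pi.sub_apply, Pi.smul_apply, smul_eq_mul, d1,
      cup] at t1 t2 t3 t4 ⊢
    linear_combination t2 - t1 + t3 + t4
  refine ⟨⟨m₁ + m₃ + MasseyAux.Cor1 U φr - w2, E⟩, ?_⟩
  -- invertibility of the index
  have hu : IsUnit ((U.index : ℕ) : ZMod p) :=
    (ZMod.isUnit_iff_coprime U.index p).mpr hUp
  obtain ⟨v, hv⟩ := hu
  set c : ZMod p := ((v⁻¹ : (ZMod p)ˣ) : ZMod p) with hcdef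
  have hc : c * ((U.index : ℕ) : ZMod p) = 1 := by
    rw [← hv]; exact Units.inv_mul v
  have hch₁ : IsChar p (cor1 U ψ₁) := by rw [hL₁]; exact MasseyAux.Cor1_isChar U hψ₁
  have hch₃ : IsChar p (cor1 U ψ₃) := by rw [hL₃]; exact MasseyAux.Cor1_isChar U hψ₃
  set W : G → ZMod p := m₁ + m₃ + MasseyAux.Cor1 U φr - w2 with hWdef
  have Ept : ∀ σ τ : G, (U.index : ZMod p) * α σ τ
      - (χ₁ σ * cor1 U ψ₁ τ + χ₃ σ * cor1 U ψ₃ τ)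
      = W σ + W τ - W (σ * τ) := by
    intro σ τ
    have h := congrFun (congrFun E σ) τ
    simp only [Pi.add_apply, Pi.sub_apply, Pi.smul_apply, smul_eq_mul, d1,
      cup, hWdef] at h ⊢
    linear_combination h
  obtain ⟨z', ⟨φ₁₂, φ₂₃, hd12, hd23, hz⟩, φ₀, hφ₀⟩ := hα
  refine ⟨cup χ₁ (φ₂₃ - fun g => c * cor1 U ψ₁ g)
      + cup (φ₁₂ + fun g => c * cor1 U ψ₃ g) χ₃,
    ⟨φ₁₂ + (fun g => c * cor1 U ψ₃ g), φ₂₃ - (fun g => c * cor1 U ψ₁ g),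
      ?_, ?_, rfl⟩, ?_⟩
  · funext σ τ
    have e12 := congrFun (congrFun hd12 σ) τ
    have q4 := hch₃ σ τ
    simp only [d1, Pi.add_apply, cup] at e12 ⊢
    linear_combination e12 - c * q4
  · funext σ τ
    have e23 := congrFun (congrFun hd23 σ) τ
    have q4 := hch₁ σ τ
    simp only [d1, Pi.sub_apply, cup] at e23 ⊢
    linear_combination e23 + c * q4
  · refine ⟨fun g => φ₀ g - c * W g + χ₃ g * (c * cor1 U ψ₃ g), ?_⟩
    funext σ τ
    have q1 := congrFun (congrFun hφ₀ σ) τ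
    have hzp := congrFun (congrFun hz σ) τ
    have q2 := Ept σ τ
    have q3 := h₃ σ τ
    have q4 := hch₃ σ τ
    simp only [Pi.add_apply, Pi.sub_apply, Pi.zero_apply, d1, cup] at q1 hzp ⊢
    linear_combination q1 + hzp - c * q2 + c * (χ₃ σ + χ₃ τ) * q4
      + c * (cor1 U ψ₃ (σ * τ)) * q3 + α σ τ * hc
end
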